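/- Define C_d(t) = ∫₀^t (p(s)·p(t−s)/p(t)) ds where p(t) = ((1 + e^{-2t/d})/2)^d. Then for all sufficiently large integers d there exist 0 < t₁ < t₂ with C_d(t₁) > C_d(t₂); in particular C_d is not monotonically non-decreasing. -/

import Mathlib

/-- Return probability at time `t` of the continuous-time walk on the `d`-dimensional
hypercube. -/
noncomputable def hcReturnProb (d : ℕ) (t : ℝ) : ℝ := ((1 + Real.exp (-2 * t / d)) / 2) ^ d

/-- Expected time spent at the origin up to time `t` conditioned on being at the origin
at time `t`. -/
noncomputable def hcCondTime (d : ℕ) (t : ℝ) : ℝ :=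
  ∫ s in (0 : ℝ)..t, hcReturnProb d s * hcReturnProb d (t - s) / hcReturnProb d t

lemma hc_one_sub_le_exp_neg (x : ℝ) : 1 - x ≤ Real.exp (-x) := by
  have := Real.add_one_le_exp (-x); linarith

lemma hc_exp_neg_le (x : ℝ) (h0 : 0 ≤ x) (h1 : x ≤ 1) : Real.exp (-x) ≤ 1 - x / 2 := by
  have hpos : 0 < Real.exp x := Real.exp_pos x
  have h2 : x + 1 ≤ Real.exp x := Real.add_one_le_exp x
  rw [Real.exp_neg]
  have hinv : (Real.exp x)⁻¹ * Real.exp x = 1 := inv_mul_cancel₀ hpos.ne'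
  nlinarith [mul_pos (inv_pos.mpr hpos) hpos, inv_pos.mpr hpos, sq_nonneg x,
    mul_le_mul_of_nonneg_left h2 (inv_pos.mpr hpos).le]

lemma hc_integrand_eq (d : ℕ) (t s : ℝ) :
    hcReturnProb d s * hcReturnProb d (t - s) / hcReturnProb d t =
    ((1 + Real.exp (-2 * s / d)) * (1 + Real.exp (-2 * (t - s) / d)) /
      (2 * (1 + Real.exp (-2 * t / d)))) ^ d := by
  unfold hcReturnProb
  rw [← mul_pow, ← div_pow]
  congr 1
  have h1 : (1 + Real.exp (-2 * t / (d:ℝ))) ≠ 0 := by positivity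
  field_simp

lemma hc_exp_mul (d : ℕ) (hd : (d:ℝ) ≠ 0) (t s : ℝ) :
    Real.exp (-2 * s / d) * Real.exp (-2 * (t - s) / d) = Real.exp (-2 * t / d) := by
  rw [← Real.exp_add]
  congr 1
  field_simp
  ring

lemma hc_glow (D s t a b : ℝ) (hD1 : 1 ≤ D) (hs0 : 0 ≤ s) (hst : s ≤ t) (ht2 : t ^ 2 = D)
    (ha : a = Real.exp (-2 * s / D)) (hb : b = Real.exp (-2 * (t - s) / D)) :
    1 - 1 / (2 * D) ≤ (1 + a) * (1 + b) / (2 * (1 + a * b)) := by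
  have hD0 : (0:ℝ) < D := by linarith
  have ha0 : 0 < a := ha ▸ Real.exp_pos _
  have hb0 : 0 < b := hb ▸ Real.exp_pos _
  have ha1 : a ≤ 1 := by
    rw [ha, Real.exp_le_one_iff]
    exact div_nonpos_of_nonpos_of_nonneg (by linarith) hD0.le
  have hb1 : b ≤ 1 := by
    rw [hb, Real.exp_le_one_iff]
    exact div_nonpos_of_nonpos_of_nonneg (by linarith) hD0.le
  have hA : (1 - a) * D ≤ 2 * s := by
    have h := Real.add_one_le_exp (-2 * s / D)
    rw [← ha, show -2 * s / D = -(2 * s / D) by ring] at h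
    have h' : 1 - a ≤ 2 * s / D := by linarith
    exact (le_div_iff₀ hD0).mp h'
  have hB : (1 - b) * D ≤ 2 * (t - s) := by
    have h := Real.add_one_le_exp (-2 * (t - s) / D)
    rw [← hb, show -2 * (t - s) / D = -(2 * (t - s) / D) by ring] at h
    have h' : 1 - b ≤ 2 * (t - s) / D := by linarith
    exact (le_div_iff₀ hD0).mp h'
  have hden : (0:ℝ) < 2 * (1 + a * b) := by nlinarith
  have key : (1 - a) * (1 - b) * D ≤ 1 + a * b := by
    have h1 : ((1 - a) * D) * ((1 - b) * D) ≤ (2 * s) * (2 * (t - s)) :=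
      mul_le_mul hA hB (by nlinarith) (by linarith)
    have h2 : (2 * s) * (2 * (t - s)) ≤ D := by nlinarith [sq_nonneg (t - 2 * s)]
    nlinarith [mul_pos ha0 hb0]
  rw [le_div_iff₀ hden]
  have e : 1 - 1 / (2 * D) = (2 * D - 1) / (2 * D) := by field_simp
  rw [e, div_mul_eq_mul_div, div_le_iff₀ (by positivity)]
  nlinarith [key]

lemma hc_lower_pointwise (d : ℕ) (hd : 1 ≤ d) (s : ℝ) (hs0 : 0 ≤ s)
    (hs1 : s ≤ Real.sqrt d) :
    Real.exp (-1) ≤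
      hcReturnProb d s * hcReturnProb d (Real.sqrt d - s) / hcReturnProb d (Real.sqrt d) := by
  have hD1 : (1:ℝ) ≤ (d:ℝ) := by exact_mod_cast hd
  have hD0 : (0:ℝ) < (d:ℝ) := by linarith
  rw [hc_integrand_eq, ← hc_exp_mul d hD0.ne' (Real.sqrt d) s]
  have ht2 : (Real.sqrt d) ^ 2 = (d:ℝ) := Real.sq_sqrt hD0.le
  have hglow := hc_glow (d:ℝ) s (Real.sqrt d) _ _ hD1 hs0 hs1 ht2 rfl rfl
  have hexp : Real.exp (-(1 / (d:ℝ))) ≤ 1 - 1 / (2 * (d:ℝ)) := by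
    have := hc_exp_neg_le (1 / (d:ℝ)) (by positivity) (by rw [div_le_one hD0]; exact hD1)
    have e : 1 / (d:ℝ) / 2 = 1 / (2 * (d:ℝ)) := by ring
    linarith [e ▸ this]
  have hpow : Real.exp (-1) = Real.exp (-(1 / (d:ℝ))) ^ d := by
    rw [← Real.exp_nat_mul]
    congr 1
    field_simp
  rw [hpow]
  exact pow_le_pow_left₀ (Real.exp_nonneg _) (le_trans hexp hglow) d

lemma hc_gup (D u a b : ℝ) (hD1 : 1 ≤ D) (hu0 : 0 ≤ u) (hu : 2 * u ≤ D)
    (ha : a = Real.exp (-2 * u / D)) (hb : b = Real.exp (-2 * (D - u) / D)) :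
    (1 + a) * (1 + b) / (2 * (1 + a * b)) ≤ 1 - u / (8 * D) := by
  have hD0 : (0:ℝ) < D := by linarith
  have ha0 : 0 < a := ha ▸ Real.exp_pos _
  have hb0 : 0 < b := hb ▸ Real.exp_pos _
  have ha1 : a ≤ 1 := by
    rw [ha, Real.exp_le_one_iff]
    exact div_nonpos_of_nonpos_of_nonneg (by linarith) hD0.le
  have hb1 : b ≤ 1 := by
    rw [hb, Real.exp_le_one_iff]
    exact div_nonpos_of_nonpos_of_nonneg (by linarith) hD0.le
  have hbhalf : b ≤ 1 / 2 := by
    have h1 : b ≤ Real.exp (-1) := by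
      rw [hb, Real.exp_le_exp]
      rw [div_le_iff₀ hD0]
      linarith
    have h2 : (2:ℝ) ≤ Real.exp 1 := by
      have := Real.add_one_le_exp 1; linarith
    have h3 : Real.exp (-1) * Real.exp 1 = 1 := by
      rw [← Real.exp_add]; norm_num
    nlinarith [Real.exp_pos (-1)]
  have hA : u ≤ (1 - a) * D := by
    have hexp1 : a * Real.exp (2 * u / D) = 1 := by
      rw [ha, ← Real.exp_add]
      rw [show -2 * u / D + 2 * u / D = 0 by ring, Real.exp_zero]
    have hle : 1 + 2 * u / D ≤ Real.exp (2 * u / D) := by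
      have := Real.add_one_le_exp (2 * u / D); linarith
    have hkey : a * (D + 2 * u) ≤ D := by
      have h1 : a * (1 + 2 * u / D) ≤ a * Real.exp (2 * u / D) :=
        mul_le_mul_of_nonneg_left hle ha0.le
      rw [hexp1] at h1
      have h2 : a * (D + 2 * u) = (a * (1 + 2 * u / D)) * D := by field_simp
      rw [h2]
      nlinarith
    nlinarith [mul_nonneg hu0 (by linarith : (0:ℝ) ≤ D - 2 * u)]
  have hden : (0:ℝ) < 2 * (1 + a * b) := by nlinarith
  rw [div_le_iff₀ hden, show 1 - u / (8 * D) = (8 * D - u) / (8 * D) by field_simp,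
    div_mul_eq_mul_div, le_div_iff₀ (by positivity : (0:ℝ) < 8 * D)]
  have hp : u * (1 / 2) ≤ ((1 - a) * D) * (1 - b) :=
    mul_le_mul hA (by linarith) (by norm_num) (by nlinarith)
  nlinarith [mul_nonneg hu0 (by nlinarith : (0:ℝ) ≤ 1 - a * b)]

lemma hc_base_pos (d : ℕ) (t s : ℝ) :
    0 < (1 + Real.exp (-2 * s / (d:ℝ))) * (1 + Real.exp (-2 * (t - s) / d)) /
      (2 * (1 + Real.exp (-2 * s / d) * Real.exp (-2 * (t - s) / d))) := by positivity

lemma hc_upper_pointwise1 (d : ℕ) (hd : 1 ≤ d) (s : ℝ) (hs0 : 0 ≤ s)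
    (hs1 : s ≤ (d:ℝ) / 2) :
    hcReturnProb d s * hcReturnProb d ((d:ℝ) - s) / hcReturnProb d (d:ℝ) ≤
      Real.exp (-s / 8) := by
  have hD1 : (1:ℝ) ≤ (d:ℝ) := by exact_mod_cast hd
  have hD0 : (0:ℝ) < (d:ℝ) := by linarith
  rw [hc_integrand_eq, ← hc_exp_mul d hD0.ne' (d:ℝ) s]
  have hgup := hc_gup (d:ℝ) s _ _ hD1 hs0 (by linarith) rfl rfl
  have h1 : 1 - s / (8 * (d:ℝ)) ≤ Real.exp (-(s / (8 * (d:ℝ)))) :=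
    hc_one_sub_le_exp_neg _
  have hbase := hc_base_pos d (d:ℝ) s
  calc ((1 + Real.exp (-2 * s / (d:ℝ))) * (1 + Real.exp (-2 * ((d:ℝ) - s) / d)) /
      (2 * (1 + Real.exp (-2 * s / d) * Real.exp (-2 * ((d:ℝ) - s) / d)))) ^ d
      ≤ (Real.exp (-(s / (8 * (d:ℝ))))) ^ d :=
        pow_le_pow_left₀ hbase.le (le_trans hgup h1) d
    _ = Real.exp (-s / 8) := by
        rw [← Real.exp_nat_mul]
        congr 1
        field_simp

lemma hc_upper_pointwise2 (d : ℕ) (hd : 1 ≤ d) (s : ℝ) (hs0 : (d:ℝ) / 2 ≤ s)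
    (hs1 : s ≤ (d:ℝ)) :
    hcReturnProb d s * hcReturnProb d ((d:ℝ) - s) / hcReturnProb d (d:ℝ) ≤
      Real.exp (-((d:ℝ) - s) / 8) := by
  have hD1 : (1:ℝ) ≤ (d:ℝ) := by exact_mod_cast hd
  have hD0 : (0:ℝ) < (d:ℝ) := by linarith
  rw [hc_integrand_eq, ← hc_exp_mul d hD0.ne' (d:ℝ) s]
  have hgup := hc_gup (d:ℝ) ((d:ℝ) - s) (Real.exp (-2 * ((d:ℝ) - s) / d))
      (Real.exp (-2 * s / d)) hD1 (by linarith) (by linarith) rfl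
      (by rw [show (d:ℝ) - ((d:ℝ) - s) = s by ring])
  have hbase := hc_base_pos d (d:ℝ) s
  have heq : (1 + Real.exp (-2 * s / (d:ℝ))) * (1 + Real.exp (-2 * ((d:ℝ) - s) / d)) /
      (2 * (1 + Real.exp (-2 * s / d) * Real.exp (-2 * ((d:ℝ) - s) / d))) =
      (1 + Real.exp (-2 * ((d:ℝ) - s) / d)) * (1 + Real.exp (-2 * s / d)) /
      (2 * (1 + Real.exp (-2 * ((d:ℝ) - s) / d) * Real.exp (-2 * s / d))) := by ring
  rw [heq]
  have hbase' : 0 < (1 + Real.exp (-2 * ((d:ℝ) - s) / d)) * (1 + Real.exp (-2 * s / d)) /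
      (2 * (1 + Real.exp (-2 * ((d:ℝ) - s) / d) * Real.exp (-2 * s / d))) := by positivity
  have h1 : 1 - ((d:ℝ) - s) / (8 * (d:ℝ)) ≤ Real.exp (-(((d:ℝ) - s) / (8 * (d:ℝ)))) :=
    hc_one_sub_le_exp_neg _
  calc ((1 + Real.exp (-2 * ((d:ℝ) - s) / d)) * (1 + Real.exp (-2 * s / d)) /
      (2 * (1 + Real.exp (-2 * ((d:ℝ) - s) / d) * Real.exp (-2 * s / d)))) ^ d
      ≤ (Real.exp (-(((d:ℝ) - s) / (8 * (d:ℝ))))) ^ d :=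
        pow_le_pow_left₀ hbase'.le (le_trans hgup h1) d
    _ = Real.exp (-((d:ℝ) - s) / 8) := by
        rw [← Real.exp_nat_mul]
        congr 1
        field_simp

lemma hc_integrand_continuous (d : ℕ) (t : ℝ) :
    Continuous fun s => hcReturnProb d s * hcReturnProb d (t - s) / hcReturnProb d t := by
  have h : Continuous fun s : ℝ => hcReturnProb d s := by
    unfold hcReturnProb; fun_prop
  exact (h.mul (h.comp (continuous_const.sub continuous_id))).div_const _

lemma hc_int_exp1 (a b : ℝ) :
    ∫ s in a..b, Real.exp (-s / 8) = 8 * Real.exp (-a / 8) - 8 * Real.exp (-b / 8) := by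
  have hderiv : ∀ x ∈ Set.uIcc a b,
      HasDerivAt (fun u : ℝ => -8 * Real.exp (-u / 8)) (Real.exp (-x / 8)) x := by
    intro x _
    have h1 : HasDerivAt (fun u : ℝ => -u / 8) (-1 / 8) x := by
      simpa using (hasDerivAt_id x).neg.div_const 8
    have h2 := (Real.hasDerivAt_exp (-x / 8)).comp x h1
    have h3 := h2.const_mul (-8)
    refine h3.congr_deriv ?_
    ring
  rw [intervalIntegral.integral_eq_sub_of_hasDerivAt hderiv
    (Continuous.intervalIntegrable (by fun_prop) a b)]
  ring

lemma hc_int_exp2 (T a b : ℝ) :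
    ∫ s in a..b, Real.exp (-(T - s) / 8) =
      8 * Real.exp (-(T - b) / 8) - 8 * Real.exp (-(T - a) / 8) := by
  have hderiv : ∀ x ∈ Set.uIcc a b,
      HasDerivAt (fun u : ℝ => 8 * Real.exp (-(T - u) / 8)) (Real.exp (-(T - x) / 8)) x := by
    intro x _
    have h1 : HasDerivAt (fun u : ℝ => -(T - u) / 8) (1 / 8) x := by
      have h0 : HasDerivAt (fun u : ℝ => T - u) (0 - 1) x :=
        (hasDerivAt_const x T).sub (hasDerivAt_id x)
      simpa using (h0.neg.div_const 8)
    have h2 := (Real.hasDerivAt_exp (-(T - x) / 8)).comp x h1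
    have h3 := h2.const_mul (8:ℝ)
    refine h3.congr_deriv ?_
    ring
  rw [intervalIntegral.integral_eq_sub_of_hasDerivAt hderiv
    (Continuous.intervalIntegrable (by fun_prop) a b)]

theorem hcCondTime_not_monotone :
    ∃ D : ℕ, ∀ d : ℕ, D ≤ d → ∃ t₁ t₂ : ℝ, 0 < t₁ ∧ t₁ < t₂ ∧
      hcCondTime d t₂ < hcCondTime d t₁ := by
  refine ⟨2500, fun d hd => ?_⟩
  have hd1 : 1 ≤ d := by omega
  have hD2500 : (2500:ℝ) ≤ (d:ℝ) := by exact_mod_cast hd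
  have hD1 : (1:ℝ) ≤ (d:ℝ) := by linarith
  have hD0 : (0:ℝ) < (d:ℝ) := by linarith
  refine ⟨Real.sqrt d, (d:ℝ), Real.sqrt_pos.mpr hD0, (Real.sqrt_lt' hD0).mpr (by nlinarith), ?_⟩
  have hsqrt0 : (0:ℝ) ≤ Real.sqrt (d:ℝ) := Real.sqrt_nonneg _
  have hlow : Real.exp (-1) * Real.sqrt d ≤ hcCondTime d (Real.sqrt d) := by
    unfold hcCondTime
    have hmono := intervalIntegral.integral_mono_on (μ := MeasureTheory.volume) (f := fun _ => Real.exp (-1)) hsqrt0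
      intervalIntegrable_const
      ((hc_integrand_continuous d (Real.sqrt d)).intervalIntegrable 0 (Real.sqrt d))
      (fun s hs => hc_lower_pointwise d hd1 s hs.1 hs.2)
    simpa [mul_comm] using hmono
  have hup : hcCondTime d (d:ℝ) ≤ 16 := by
    unfold hcCondTime
    have hi1 : IntervalIntegrable
        (fun s => hcReturnProb d s * hcReturnProb d ((d:ℝ) - s) / hcReturnProb d (d:ℝ))
        MeasureTheory.volume 0 ((d:ℝ) / 2) :=
      (hc_integrand_continuous d (d:ℝ)).intervalIntegrable _ _
    have hi2 : IntervalIntegrable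
        (fun s => hcReturnProb d s * hcReturnProb d ((d:ℝ) - s) / hcReturnProb d (d:ℝ))
        MeasureTheory.volume ((d:ℝ) / 2) (d:ℝ) :=
      (hc_integrand_continuous d (d:ℝ)).intervalIntegrable _ _
    rw [← intervalIntegral.integral_add_adjacent_intervals hi1 hi2]
    have b1 : (∫ s in (0:ℝ)..((d:ℝ) / 2),
        hcReturnProb d s * hcReturnProb d ((d:ℝ) - s) / hcReturnProb d (d:ℝ)) ≤ 8 := by
      have hmono := intervalIntegral.integral_mono_on (by linarith : (0:ℝ) ≤ (d:ℝ) / 2) hi1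
        (Continuous.intervalIntegrable (by fun_prop) _ _)
        (fun s hs => hc_upper_pointwise1 d hd1 s hs.1 hs.2)
      rw [hc_int_exp1] at hmono
      have hp := Real.exp_pos (-((d:ℝ) / 2) / 8)
      have h0 : Real.exp (-(0:ℝ) / 8) = 1 := by norm_num
      rw [h0] at hmono
      linarith
    have b2 : (∫ s in ((d:ℝ) / 2)..(d:ℝ),
        hcReturnProb d s * hcReturnProb d ((d:ℝ) - s) / hcReturnProb d (d:ℝ)) ≤ 8 := by
      have hmono := intervalIntegral.integral_mono_on (by linarith : (d:ℝ) / 2 ≤ (d:ℝ)) hi2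
        (Continuous.intervalIntegrable (by fun_prop) _ _)
        (fun s hs => hc_upper_pointwise2 d hd1 s hs.1 hs.2)
      rw [hc_int_exp2] at hmono
      have hp := Real.exp_pos (-((d:ℝ) - (d:ℝ) / 2) / 8)
      have h0 : Real.exp (-((d:ℝ) - (d:ℝ)) / 8) = 1 := by
        rw [show -((d:ℝ) - (d:ℝ)) / 8 = 0 by ring, Real.exp_zero]
      rw [h0] at hmono
      linarith
    linarith
  have h50 : (50:ℝ) ≤ Real.sqrt d := by
    rw [show (50:ℝ) = Real.sqrt 2500 by
      rw [show (2500:ℝ) = 50 ^ 2 by norm_num, Real.sqrt_sq (by norm_num)]]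
    exact Real.sqrt_le_sqrt hD2500
  have hexp1 : Real.exp 1 < 2.7182818286 := Real.exp_one_lt_d9
  have hee : Real.exp (-1) * Real.exp 1 = 1 := by rw [← Real.exp_add]; norm_num
  have hfin : (16:ℝ) < Real.exp (-1) * Real.sqrt d := by
    nlinarith [Real.exp_pos (-1), Real.exp_pos 1,
      mul_le_mul_of_nonneg_left h50 (Real.exp_pos (-1)).le]
  linarith
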